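/- arXiv:1505.00019 — 2 statements merged into one kernel-verified Lean document; each statement's English description precedes it below -/
import Mathlib

section
/- The uniform morphism φ on {1,2,3} with φ(1)=12321, φ(2)=23132, φ(3)=31213 is weakly squarefree: for every weakly squarefree word W, the image φ(W) is weakly squarefree. -/
/-- A square: a word of the form `x ++ x` with `x` nonempty. -/
def IsSq {α : Type*} (w : List α) : Prop := ∃ x : List α, x ≠ [] ∧ w = x ++ x

/-- A cube: a word of the form `x ++ x ++ x` with `x` nonempty. -/
def IsCube {α : Type*} (w : List α) : Prop := ∃ x : List α, x ≠ [] ∧ w = x ++ x ++ x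

/-- A weak square: a word of the form `a ++ x ++ x ++ a` with `a` a letter. -/
def IsWeakSq {α : Type*} (w : List α) : Prop :=
  ∃ (a : α) (x : List α), w = a :: (x ++ x ++ [a])

/-- An overlap: a word of the form `a ++ x ++ a ++ x ++ a`. -/
def IsOverlap {α : Type*} (w : List α) : Prop :=
  ∃ (a : α) (x : List α), w = a :: (x ++ a :: x ++ [a])

def SqFree {α : Type*} (w : List α) : Prop := ∀ v, v <:+: w → ¬ IsSq v
def CubeFree {α : Type*} (w : List α) : Prop := ∀ v, v <:+: w → ¬ IsCube v
def WeakSqFree {α : Type*} (w : List α) : Prop := ∀ v, v <:+: w → ¬ IsWeakSq v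
def OverlapFree {α : Type*} (w : List α) : Prop := ∀ v, v <:+: w → ¬ IsOverlap v

/-- Applying the morphism determined by letter images `φ` to a finite word. -/
def applyM {α : Type*} (φ : α → List α) (w : List α) : List α := (w.map φ).flatten

def phi : Fin 3 → List (Fin 3) := ![[0,1,2,1,0], [1,2,0,2,1], [2,0,1,0,2]]


/-! ### Auxiliary lemmas -/

lemma phi_len : ∀ c, (phi c).length = 5 := by decide

lemma phi_first : ∀ c : Fin 3, (phi c).getD 0 0 = c := by decide
lemma phi_last : ∀ c : Fin 3, (phi c).getD 4 0 = c := by decide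
lemma phi_nodouble : ∀ c : Fin 3, ∀ r : Fin 4, (phi c).getD r.1 0 ≠ (phi c).getD (r.1+1) 0 := by
  decide
lemma phi_sync : ∀ (c d e : Fin 3) (u : Fin 5), u.1 ≠ 0 →
    ¬ (∀ s : Fin 5, (phi c).getD s.1 0
        = (phi (if s.1 + u.1 < 5 then d else e)).getD ((s.1 + u.1) % 5) 0) := by decide

lemma applyM_cons (c : Fin 3) (w : List (Fin 3)) :
    applyM phi (c :: w) = phi c ++ applyM phi w := rfl

lemma applyM_length (w : List (Fin 3)) : (applyM phi w).length = 5 * w.length := by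
  induction w with
  | nil => rfl
  | cons c w ih => rw [applyM_cons, List.length_append, phi_len, ih, List.length_cons]; omega

lemma applyM_getD : ∀ (W : List (Fin 3)) (j : ℕ), j < 5 * W.length →
    (applyM phi W).getD j 0 = (phi (W.getD (j/5) 0)).getD (j % 5) 0 := by
  intro W
  induction W with
  | nil => intro j hj; simp at hj
  | cons c V ih =>
    intro j hj
    rw [applyM_cons]
    by_cases h5 : j < 5
    · rw [List.getD_append _ _ _ _ (by rw [phi_len]; omega)]
      have e1 : j / 5 = 0 := by omega
      have e2 : j % 5 = j := by omega
      rw [e1, e2, List.getD_cons_zero]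
    · rw [List.getD_append_right _ _ _ _ (by rw [phi_len]; omega), phi_len]
      have hj' : j - 5 < 5 * V.length := by
        rw [List.length_cons] at hj; omega
      rw [ih _ hj']
      obtain ⟨n, hn⟩ : ∃ n, j / 5 = n + 1 := ⟨j/5 - 1, by omega⟩
      have e1 : (j-5)/5 = n := by omega
      have e2 : (j-5)%5 = j%5 := by omega
      rw [e1, e2, hn, List.getD_cons_succ]

lemma applyM_take : ∀ (n : ℕ) (X : List (Fin 3)),
    applyM phi (X.take n) = (applyM phi X).take (5*n) := by
  intro n
  induction n with
  | zero => intro X; simp [applyM]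
  | succ n ih =>
    intro X
    cases X with
    | nil => simp [applyM]
    | cons c X =>
      rw [List.take_succ_cons, applyM_cons, applyM_cons, ih,
        List.take_append,
        List.take_of_length_le (show (phi c).length ≤ 5*(n+1) from by rw [phi_len]; omega),
        phi_len, show 5*(n+1) - 5 = 5*n from by omega]

lemma applyM_drop : ∀ (n : ℕ) (X : List (Fin 3)),
    applyM phi (X.drop n) = (applyM phi X).drop (5*n) := by
  intro n
  induction n with
  | zero => simp
  | succ n ih =>
    intro X
    cases X with
    | nil => simp [applyM]
    | cons c X =>
      rw [List.drop_succ_cons, applyM_cons, ih,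
        List.drop_append,
        List.drop_of_length_le (show (phi c).length ≤ 5*(n+1) from by rw [phi_len]; omega),
        phi_len, show 5*(n+1) - 5 = 5*n from by omega, List.nil_append]

lemma take_drop_infix {α : Type*} (w : List α) (n k : ℕ) : ((w.drop n).take k) <:+: w :=
  (List.take_prefix _ _).isInfix.trans (List.drop_suffix _ _).isInfix

lemma getD_drop_take (w : List (Fin 3)) (q l n : ℕ) (h1 : n < l) (h2 : q + l ≤ w.length) :
    ((w.drop q).take l).getD n 0 = w.getD (q+n) 0 := by
  have hlen : n < ((w.drop q).take l).length := by
    simp only [List.length_take, List.length_drop]; omega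
  rw [List.getD_eq_getElem _ _ hlen, List.getD_eq_getElem _ _ (by omega)]
  simp [List.getElem_take, List.getElem_drop]

/-! ### The decidable check on short words -/

def wsB (l : List (Fin 3)) : Bool :=
  match l with
  | [] => false
  | a :: rest =>
    !(rest.isEmpty) && (rest.take (rest.length / 2) ++ rest.take (rest.length / 2) ++ [a] == rest)

def noWSB (w : List (Fin 3)) : Bool :=
  (List.range (w.length+1)).all fun n => (List.range (w.length+1)).all fun k =>
    !(wsB ((w.drop n).take k))

lemma wsB_iff (l : List (Fin 3)) : wsB l = true ↔ IsWeakSq l := by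
  cases l with
  | nil =>
    rw [show wsB [] = false from rfl]
    simp only [Bool.false_eq_true, false_iff]
    rintro ⟨a, x, h⟩
    cases h
  | cons a rest =>
    simp only [wsB, Bool.and_eq_true, Bool.not_eq_true', List.isEmpty_eq_false_iff, beq_iff_eq]
    constructor
    · rintro ⟨-, heq⟩
      exact ⟨a, rest.take (rest.length/2), by conv_lhs => rw [← heq]⟩
    · rintro ⟨a', x, hcons⟩
      have ha : a = a' := (List.cons.injEq _ _ _ _ ▸ hcons).1
      have hrest : rest = x ++ x ++ [a'] := (List.cons.injEq _ _ _ _ ▸ hcons).2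
      subst ha
      constructor
      · rw [hrest]; simp
      · have hlen : rest.length / 2 = x.length := by rw [hrest]; simp; omega
        have htk : rest.take x.length = x := by
          rw [hrest, List.append_assoc]; exact List.take_left
        rw [hlen, htk, ← hrest]
    
lemma noWSB_bound (w : List (Fin 3)) : noWSB w = true ↔
    ∀ n k : ℕ, n < w.length + 1 → k < w.length + 1 → ¬ IsWeakSq ((w.drop n).take k) := by
  simp only [noWSB, List.all_eq_true, List.mem_range, Bool.not_eq_true', ← wsB_iff]
  constructor
  · intro h n k hn hk
    simp [h n hn k hk]
  · intro h n hn k hk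
    simp [h n k hn hk]

lemma wsf_of_noWSB {w : List (Fin 3)} (h : noWSB w = true) : WeakSqFree w := by
  intro v hv hws
  obtain ⟨s, t, hst⟩ := hv
  have hlens : s.length + v.length + t.length = w.length := by
    have := congrArg List.length hst
    simp only [List.length_append] at this
    omega
  have hveq : (w.drop s.length).take v.length = v := by
    rw [← hst, List.append_assoc, List.drop_left, List.take_left]
  refine (noWSB_bound w).mp h s.length v.length (by omega) (by omega) ?_
  rw [hveq]
  exact hws

lemma noWSB_of_wsf {w : List (Fin 3)} (h : WeakSqFree w) : noWSB w = true :=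
  (noWSB_bound w).mpr fun n k _ _ => h _ (take_drop_infix w n k)

def words : ℕ → List (List (Fin 3))
  | 0 => [[]]
  | n+1 => [[]] ++ (words n).flatMap (fun w => [0 :: w, 1 :: w, 2 :: w])

lemma mem_words : ∀ n (w : List (Fin 3)), w.length ≤ n → w ∈ words n := by
  intro n
  induction n with
  | zero =>
    intro w h
    have : w = [] := List.length_eq_zero_iff.mp (by omega)
    subst this; simp [words]
  | succ n ih =>
    intro w h
    cases w with
    | nil => simp [words]
    | cons c w' =>
      refine List.mem_append_right _ (List.mem_flatMap.mpr ⟨w', ih w' (by simp at h; omega), ?_⟩)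
      fin_cases c <;> simp

set_option maxRecDepth 100000 in
set_option maxHeartbeats 4000000 in
lemma check5 : ((words 5).all (fun w => !noWSB w || noWSB (applyM phi w))) = true := by decide

lemma check5' : ∀ w : List (Fin 3), w.length ≤ 5 → WeakSqFree w → WeakSqFree (applyM phi w) := by
  intro w hl hwsf
  have h2 := List.all_eq_true.mp check5 w (mem_words 5 w hl)
  rw [noWSB_of_wsf hwsf] at h2
  simp only [Bool.not_true, Bool.false_or] at h2
  exact wsf_of_noWSB h2

lemma infix_take {α : Type*} (A v B : List α) (N : ℕ) (h : A.length + v.length ≤ N) :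
    v <:+: (A ++ (v ++ B)).take N := by
  refine ⟨A, B.take (N - A.length - v.length), ?_⟩
  rw [List.take_append, List.take_append,
    List.take_of_length_le (show A.length ≤ N from by omega),
    List.take_of_length_le (show v.length ≤ N - A.length from by omega),
    List.append_assoc]

/-! ### Main theorem -/

theorem stmt3 : ∀ W : List (Fin 3), WeakSqFree W → WeakSqFree (applyM phi W) := by
  intro W hW v hinf hws
  obtain ⟨a, x, rfl⟩ := hws
  obtain ⟨s, t, hst⟩ := hinf
  set J := applyM phi W with hJdef
  set p := x.length with hpdef
  have lenJ : J.length = 5 * W.length := applyM_length W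
  have hlen : s.length + (2*p+2) + t.length = 5 * W.length := by
    have := congrArg List.length hst
    simp only [List.length_append, List.length_cons, List.length_nil, lenJ] at this
    omega
  set i := s.length + 1 with hidef
  have hg : ∀ n, n < 2*p+2 → J.getD (s.length + n) 0 = (a :: (x ++ x ++ [a])).getD n 0 := by
    intro n hn
    rw [← hst, List.append_assoc, List.getD_append_right _ _ _ _ (Nat.le_add_right _ _),
      Nat.add_sub_cancel_left, List.getD_append _ _ _ _ (by simp; omega)]
  have ha1 : J.getD (i-1) 0 = a := by
    have := hg 0 (by omega)
    simpa [hidef] using this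
  have ha2 : J.getD (i+2*p) 0 = a := by
    have h0 := hg (2*p+1) (by omega)
    have : i + 2*p = s.length + (2*p+1) := by omega
    rw [this, h0, List.getD_cons_succ,
      List.getD_append_right _ _ _ _ (show (x ++ x).length ≤ 2*p from by simp; omega),
      show 2*p - (x ++ x).length = 0 from by simp; omega]
    exact List.getD_cons_zero
  have hx2 : ∀ d, d < p → J.getD (i+d) 0 = J.getD (i+p+d) 0 := by
    intro d hd
    have e1 := hg (1+d) (by omega)
    have e2 := hg (1+p+d) (by omega)
    have f1 : i + d = s.length + (1+d) := by omega
    have f2 : i + p + d = s.length + (1+p+d) := by omega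
    rw [f1, f2, e1, e2]
    have g1 : (1:ℕ)+d = d+1 := by omega
    have g2 : (1:ℕ)+p+d = (p+d)+1 := by omega
    rw [g1, g2, List.getD_cons_succ, List.getD_cons_succ,
      List.getD_append _ _ _ _ (show d < (x ++ x).length from by simp; omega),
      List.getD_append _ _ _ _ (show d < x.length from by omega),
      List.getD_append _ _ _ _ (show p + d < (x ++ x).length from by simp; omega),
      List.getD_append_right _ _ _ _ (show x.length ≤ p + d from by omega)]
    congr 1
    omega
  have hP : ∀ j, j < 5*W.length → J.getD j 0 = (phi (W.getD (j/5) 0)).getD (j%5) 0 :=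
    applyM_getD W
  by_cases hsmall : p ≤ 8
  · -- short weak square: transfer to a short factor of W
    set q2 := s.length / 5 with hq2def
    have hsd : applyM phi (W.drop q2) = J.drop (5*q2) := applyM_drop q2 W
    have hW'img : applyM phi ((W.drop q2).take 5) = (J.drop (5*q2)).take 25 := by
      rw [applyM_take, hsd]
    have hdec : J.drop (5*q2) = s.drop (5*q2) ++ ((a :: (x ++ x ++ [a])) ++ t) := by
      conv_lhs => rw [← hst]
      rw [List.append_assoc, List.drop_append]
      have : 5*q2 - s.length = 0 := by omega
      rw [this, List.drop_zero]
    have hvW' : (a :: (x ++ x ++ [a])) <:+: applyM phi ((W.drop q2).take 5) := by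
      rw [hW'img, hdec]
      apply infix_take
      simp only [List.length_drop, List.length_cons, List.length_append, List.length_nil]
      omega
    have hW'wsf : WeakSqFree ((W.drop q2).take 5) := fun u hu hws =>
      hW u (hu.trans (take_drop_infix W q2 5)) hws
    exact check5' _ (by simpa using List.length_take_le 5 _) hW'wsf _ hvW' ⟨a, x, rfl⟩
  · -- long weak square: synchronize
    push_neg at hsmall
    have hiJ : i + 2*p + 1 ≤ 5*W.length := by omega
    have hp5 : p % 5 = 0 := by
      by_contra hu0
      set k₁ := (i+4)/5 with hk₁def
      refine phi_sync (W.getD k₁ 0) (W.getD (k₁ + p/5) 0) (W.getD (k₁ + p/5 + 1) 0)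
        ⟨p % 5, by omega⟩ hu0 ?_
      intro s5
      have hs5 : s5.1 < 5 := s5.2
      have e1 : J.getD (5*k₁ + s5.1) 0 = (phi (W.getD k₁ 0)).getD s5.1 0 := by
        rw [hP _ (by omega)]
        have d1 : (5*k₁+s5.1)/5 = k₁ := by omega
        have d2 : (5*k₁+s5.1)%5 = s5.1 := by omega
        rw [d1, d2]
      have e2 : J.getD (5*k₁+s5.1) 0 = J.getD (5*k₁+s5.1+p) 0 := by
        have h' := hx2 (5*k₁+s5.1 - i) (by omega)
        have f1 : i + (5*k₁+s5.1-i) = 5*k₁+s5.1 := by omega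
        have f2 : i + p + (5*k₁+s5.1-i) = 5*k₁+s5.1+p := by omega
        rw [f1, f2] at h'
        exact h'
      have e3 : J.getD (5*k₁+s5.1+p) 0
          = (phi (if s5.1 + p%5 < 5 then W.getD (k₁ + p/5) 0 else W.getD (k₁ + p/5 + 1) 0)).getD
            ((s5.1 + p%5) % 5) 0 := by
        rw [hP _ (by omega)]
        by_cases hc : s5.1 + p%5 < 5
        · have d1 : (5*k₁+s5.1+p)/5 = k₁ + p/5 := by omega
          have d2 : (5*k₁+s5.1+p)%5 = (s5.1+p%5)%5 := by omega
          rw [d1, d2, if_pos hc]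
        · have d1 : (5*k₁+s5.1+p)/5 = k₁ + p/5 + 1 := by omega
          have d2 : (5*k₁+s5.1+p)%5 = (s5.1+p%5)%5 := by omega
          rw [d1, d2, if_neg hc]
      rw [← e1, e2, e3]
    set m := p/5 with hmdef
    set q := i/5 with hqdef
    set r := i%5 with hrdef
    have blockEq : ∀ k, q ≤ k → k < q+m → W.getD k 0 = W.getD (k+m) 0 := by
      intro k h1 h2
      have b1 : J.getD (5*k+4) 0 = (phi (W.getD k 0)).getD 4 0 := by
        rw [hP _ (by omega)]
        have d1 : (5*k+4)/5 = k := by omega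
        have d2 : (5*k+4)%5 = 4 := by omega
        rw [d1, d2]
      have b2 : J.getD (5*(k+m)+4) 0 = (phi (W.getD (k+m) 0)).getD 4 0 := by
        rw [hP _ (by omega)]
        have d1 : (5*(k+m)+4)/5 = k+m := by omega
        have d2 : (5*(k+m)+4)%5 = 4 := by omega
        rw [d1, d2]
      have b3 : J.getD (5*k+4) 0 = J.getD (5*(k+m)+4) 0 := by
        have h' := hx2 (5*k+4-i) (by omega)
        have f1 : i + (5*k+4-i) = 5*k+4 := by omega
        have f2 : i + p + (5*k+4-i) = 5*(k+m)+4 := by omega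
        rw [f1, f2] at h'
        exact h'
      rw [phi_last] at b1 b2
      rw [← b1, b3, b2]
    by_cases hr : r = 0
    · -- aligned case: weak square in W
      have hq1 : 1 ≤ q := by omega
      have hqW : q + 2*m < W.length := by omega
      have c1 : W.getD (q-1) 0 = a := by
        have u1 : J.getD (5*(q-1)+4) 0 = (phi (W.getD ((5*(q-1)+4)/5) 0)).getD ((5*(q-1)+4)%5) 0 :=
          hP _ (by omega)
        have d1 : (5*(q-1)+4)/5 = q-1 := by omega
        have d2 : (5*(q-1)+4)%5 = 4 := by omega
        have d3 : 5*(q-1)+4 = i-1 := by omega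
        rw [d1, d2, d3, phi_last, ha1] at u1
        exact u1.symm
      have c2 : W.getD (q+2*m) 0 = a := by
        have u1 : J.getD (5*(q+2*m)) 0 = (phi (W.getD ((5*(q+2*m))/5) 0)).getD ((5*(q+2*m))%5) 0 :=
          hP _ (by omega)
        have d1 : (5*(q+2*m))/5 = q+2*m := by omega
        have d2 : (5*(q+2*m))%5 = 0 := by omega
        have d3 : 5*(q+2*m) = i+2*p := by omega
        rw [d1, d2, d3, phi_first, ha2] at u1
        exact u1.symm
      set Y := (W.drop q).take m with hYdef
      have hYlen : Y.length = m := by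
        simp only [hYdef, List.length_take, List.length_drop]; omega
      have key : a :: (Y ++ Y ++ [a]) = (W.drop (q-1)).take (2*m+2) := by
        have hkl : (a :: (Y ++ Y ++ [a])).length = 2*m+2 := by
          rw [List.length_cons, List.length_append, List.length_append, hYlen,
            List.length_singleton]
          omega
        apply List.ext_getElem
        · rw [hkl, List.length_take, List.length_drop]
          omega
        · intro n h1 h2
          have h1' : n < 2*m+2 := by rw [hkl] at h1; exact h1
          rw [← List.getD_eq_getElem _ 0 h1, ← List.getD_eq_getElem _ 0 h2,
            getD_drop_take W (q-1) (2*m+2) n h1' (by omega)]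
          rcases Nat.eq_zero_or_pos n with hn0 | hn0
          · subst hn0
            simpa using c1.symm
          · obtain ⟨n', rfl⟩ : ∃ n', n = n'+1 := ⟨n-1, by omega⟩
            rw [List.getD_cons_succ]
            by_cases hc1 : n' < m
            · rw [List.getD_append _ _ _ _ (show n' < (Y ++ Y).length from by
                  rw [List.length_append, hYlen]; omega),
                List.getD_append _ _ _ _ (show n' < Y.length from by rw [hYlen]; omega),
                hYdef, getD_drop_take W q m n' hc1 (by omega)]
              congr 1
              omega
            · by_cases hc2 : n' < 2*m
              · rw [List.getD_append _ _ _ _ (show n' < (Y ++ Y).length from by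
                    rw [List.length_append, hYlen]; omega),
                  List.getD_append_right _ _ _ _ (show Y.length ≤ n' from by
                    rw [hYlen]; omega),
                  hYlen, hYdef, getD_drop_take W q m (n'-m) (by omega) (by omega),
                  blockEq (q+(n'-m)) (by omega) (by omega)]
                congr 1
                omega
              · rw [List.getD_append_right _ _ _ _ (show (Y ++ Y).length ≤ n' from by
                    rw [List.length_append, hYlen]; omega),
                  show n' - (Y ++ Y).length = 0 from by
                    rw [List.length_append, hYlen]; omega,
                  List.getD_cons_zero,
                  show q - 1 + (n'+1) = q + 2*m from by omega, c2]
      refine hW (a :: (Y ++ Y ++ [a])) ?_ ⟨a, Y, rfl⟩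
      rw [key]
      exact take_drop_infix W (q-1) (2*m+2)
    · -- misaligned case: contradiction with phi_nodouble
      have d0 : W.getD (q+2*m) 0 = W.getD (q+m) 0 := by
        have u1 : J.getD (5*(q+m)) 0 = (phi (W.getD ((5*(q+m))/5) 0)).getD ((5*(q+m))%5) 0 :=
          hP _ (by omega)
        have u2 : J.getD (5*(q+2*m)) 0 = (phi (W.getD ((5*(q+2*m))/5) 0)).getD ((5*(q+2*m))%5) 0 :=
          hP _ (by omega)
        have e1 : (5*(q+m))/5 = q+m := by omega
        have e2 : (5*(q+m))%5 = 0 := by omega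
        have e3 : (5*(q+2*m))/5 = q+2*m := by omega
        have e4 : (5*(q+2*m))%5 = 0 := by omega
        rw [e1, e2, phi_first] at u1
        rw [e3, e4, phi_first] at u2
        have u3 : J.getD (5*(q+m)) 0 = J.getD (5*(q+2*m)) 0 := by
          have h' := hx2 (5*(q+m)-i) (by omega)
          have f1 : i + (5*(q+m)-i) = 5*(q+m) := by omega
          have f2 : i + p + (5*(q+m)-i) = 5*(q+2*m) := by omega
          rw [f1, f2] at h'
          exact h'
        rw [← u2, ← u3, u1]
      have d1 : (phi (W.getD q 0)).getD (r-1) 0 = a := by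
        have u1 : J.getD (i-1) 0 = (phi (W.getD ((i-1)/5) 0)).getD ((i-1)%5) 0 :=
          hP _ (by omega)
        have e1 : (i-1)/5 = q := by omega
        have e2 : (i-1)%5 = r-1 := by omega
        rw [e1, e2, ha1] at u1
        exact u1.symm
      have d2 : (phi (W.getD q 0)).getD r 0 = a := by
        have u1 : J.getD (i+2*p) 0 = (phi (W.getD ((i+2*p)/5) 0)).getD ((i+2*p)%5) 0 :=
          hP _ (by omega)
        have e1 : (i+2*p)/5 = q+2*m := by omega
        have e2 : (i+2*p)%5 = r := by omega
        rw [e1, e2, ha2, d0, ← blockEq q (le_refl q) (by omega)] at u1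
        exact u1.symm
      refine phi_nodouble (W.getD q 0) ⟨r-1, by omega⟩ ?_
      have : r - 1 + 1 = r := by omega
      rw [this, d1, d2]
end

section
/- There is no 3-uniform morphism over the ternary alphabet {1,2,3} that is simultaneously weakly squarefree, cubefree, overlap-free and has a fixed point (i.e., some letter a with φ(a) starting in a). -/
section dec
variable {α : Type*} [DecidableEq α]

lemma isWeakSq_iff (v : List α) :
    IsWeakSq v ↔ ∃ a ∈ v, ∃ x ∈ v.tail.inits, v = a :: (x ++ x ++ [a]) := by
  constructor
  · rintro ⟨a, x, rfl⟩
    exact ⟨a, List.mem_cons_self, x, (List.mem_inits ..).2 ⟨x ++ [a], by simp⟩, rfl⟩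
  · rintro ⟨a, -, x, -, h⟩; exact ⟨a, x, h⟩

instance (v : List α) : Decidable (IsWeakSq v) :=
  decidable_of_iff _ (isWeakSq_iff v).symm

lemma weakSqFree_iff (w : List α) :
    WeakSqFree w ↔ ∀ t ∈ w.tails, ∀ v ∈ t.inits, ¬ IsWeakSq v := by
  constructor
  · intro h t ht v hv
    exact h v (List.infix_iff_prefix_suffix.2 ⟨t, (List.mem_inits ..).1 hv, (List.mem_tails ..).1 ht⟩)
  · intro h v hv
    obtain ⟨t, hp, hs⟩ := List.infix_iff_prefix_suffix.1 hv
    exact h t ((List.mem_tails ..).2 hs) v ((List.mem_inits ..).2 hp)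

instance (w : List α) : Decidable (WeakSqFree w) :=
  decidable_of_iff _ (weakSqFree_iff w).symm

lemma isOverlap_iff (v : List α) :
    IsOverlap v ↔ ∃ a ∈ v, ∃ x ∈ v.tail.inits, v = a :: (x ++ a :: x ++ [a]) := by
  constructor
  · rintro ⟨a, x, rfl⟩
    exact ⟨a, List.mem_cons_self, x, (List.mem_inits ..).2 ⟨a :: x ++ [a], by simp⟩, rfl⟩
  · rintro ⟨a, -, x, -, h⟩; exact ⟨a, x, h⟩

instance (v : List α) : Decidable (IsOverlap v) :=
  decidable_of_iff _ (isOverlap_iff v).symm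

lemma overlapFree_iff (w : List α) :
    OverlapFree w ↔ ∀ t ∈ w.tails, ∀ v ∈ t.inits, ¬ IsOverlap v := by
  constructor
  · intro h t ht v hv
    exact h v (List.infix_iff_prefix_suffix.2 ⟨t, (List.mem_inits ..).1 hv, (List.mem_tails ..).1 ht⟩)
  · intro h v hv
    obtain ⟨t, hp, hs⟩ := List.infix_iff_prefix_suffix.1 hv
    exact h t ((List.mem_tails ..).2 hs) v ((List.mem_inits ..).2 hp)

instance (w : List α) : Decidable (OverlapFree w) :=
  decidable_of_iff _ (overlapFree_iff w).symm

end dec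

/-- Fast checker: does `t` begin with a weak square? -/
def wsPre : List (Fin 3) → Bool
  | [] => false
  | a :: r => (List.range (r.length / 2 + 1)).any fun k =>
      (r.take k == (r.drop k).take k) && ((r.drop (2 * k)).head? == some a)

/-- Fast checker: does `t` begin with an overlap? -/
def ovPre : List (Fin 3) → Bool
  | [] => false
  | a :: r => (List.range r.length).any fun k =>
      (r.take k == (r.drop (k + 1)).take k) && ((r.drop k).head? == some a)
        && ((r.drop (2 * k + 1)).head? == some a)

def hasWS (w : List (Fin 3)) : Bool := w.tails.any wsPre
def hasOv (w : List (Fin 3)) : Bool := w.tails.any ovPre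

lemma head?_eq_cons {r : List (Fin 3)} {a : Fin 3} (h : r.head? = some a) :
    ∃ l, r = a :: l := by
  cases r with
  | nil => simp at h
  | cons b l => simp at h; exact ⟨l, by rw [h]⟩

lemma wsPre_sound {t : List (Fin 3)} (h : wsPre t = true) :
    ∃ v, v <+: t ∧ IsWeakSq v := by
  match t with
  | [] => simp [wsPre] at h
  | a :: r =>
    simp only [wsPre, List.any_eq_true, Bool.and_eq_true, beq_iff_eq] at h
    obtain ⟨k, -, h1, h2⟩ := h
    obtain ⟨tl, htl⟩ := head?_eq_cons h2
    obtain ⟨x, hx⟩ : ∃ x, r = x ++ x ++ (a :: tl) := by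
      refine ⟨r.take k, ?_⟩
      conv_lhs => rw [← List.take_append_drop k r]
      rw [List.append_assoc]
      congr 1
      conv_lhs => rw [← List.take_append_drop k (r.drop k)]
      rw [← h1, List.drop_drop, ← htl]
      congr 2
      omega
    refine ⟨a :: (x ++ x ++ [a]), ⟨tl, ?_⟩, a, x, rfl⟩
    rw [hx]; simp

lemma ovPre_sound {t : List (Fin 3)} (h : ovPre t = true) :
    ∃ v, v <+: t ∧ IsOverlap v := by
  match t with
  | [] => simp [ovPre] at h
  | a :: r =>
    simp only [ovPre, List.any_eq_true, Bool.and_eq_true, beq_iff_eq] at h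
    obtain ⟨k, -, ⟨h1, h2⟩, h3⟩ := h
    obtain ⟨l, hl⟩ := head?_eq_cons h2
    obtain ⟨l2, hl2⟩ := head?_eq_cons h3
    have hdk1 : r.drop (k + 1) = l := by
      have h := congrArg (List.drop 1) hl
      rw [List.drop_drop] at h
      simpa [Nat.add_comm] using h
    have hdk2 : (r.drop (k + 1)).drop k = a :: l2 := by
      rw [List.drop_drop, ← hl2]
      congr 1
      omega
    obtain ⟨x, hx⟩ : ∃ x, r = x ++ a :: (x ++ a :: l2) := by
      refine ⟨r.take k, ?_⟩
      conv_lhs => rw [← List.take_append_drop k r]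
      congr 1
      rw [hl]
      congr 1
      rw [← hdk1]
      conv_lhs => rw [← List.take_append_drop k (r.drop (k+1))]
      rw [← h1, hdk2]
    refine ⟨a :: (x ++ a :: x ++ [a]), ⟨l2, ?_⟩, a, x, rfl⟩
    rw [hx]; simp

lemma hasWS_eq_false {w : List (Fin 3)} (h : WeakSqFree w) : hasWS w = false := by
  by_contra hb
  rw [Bool.not_eq_false] at hb
  simp only [hasWS, List.any_eq_true] at hb
  obtain ⟨t, ht, hp⟩ := hb
  obtain ⟨v, hv, hws⟩ := wsPre_sound hp
  exact h v (List.infix_iff_prefix_suffix.2 ⟨t, hv, (List.mem_tails ..).1 ht⟩) hws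

lemma hasOv_eq_false {w : List (Fin 3)} (h : OverlapFree w) : hasOv w = false := by
  by_contra hb
  rw [Bool.not_eq_false] at hb
  simp only [hasOv, List.any_eq_true] at hb
  obtain ⟨t, ht, hp⟩ := hb
  obtain ⟨v, hv, hov⟩ := ovPre_sound hp
  exact h v (List.infix_iff_prefix_suffix.2 ⟨t, hv, (List.mem_tails ..).1 ht⟩) hov

def mor (p q r s t u v w x : Fin 3) : Fin 3 → List (Fin 3) :=
  fun i => if i = 0 then [p, q, r] else if i = 1 then [s, t, u] else [v, w, x]

def rows27 : List (List (Fin 3)) :=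
  (List.finRange 3).flatMap fun p => (List.finRange 3).flatMap fun q =>
    (List.finRange 3).map fun r => [p, q, r]

def rows12 : List (List (Fin 3)) := rows27.filter fun R => !hasWS R

def good (R0 R1 R2 : List (Fin 3)) : Bool :=
  (R0.head? == some 0 || R1.head? == some 1 || R2.head? == some 2) &&
  !hasWS (R0 ++ R1 ++ R2 ++ R0) && !hasOv (R1 ++ R2 ++ R2 ++ R1) && !hasWS (R0 ++ R2)

def ok : Bool := rows12.all fun R0 => rows12.all fun R1 => rows12.all fun R2 => !good R0 R1 R2

set_option maxRecDepth 100000 in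
set_option maxHeartbeats 10000000 in
lemma okT : ok = true := by decide

lemma mem12 : ∀ p q r : Fin 3, hasWS [p, q, r] = false → [p, q, r] ∈ rows12 := by decide

lemma key : ∀ p q r s t u v w x : Fin 3, (p = 0 ∨ s = 1 ∨ v = 2) →
    hasWS [p, q, r] = false → hasWS [s, t, u] = false → hasWS [v, w, x] = false →
    hasWS [p, q, r, s, t, u, v, w, x, p, q, r] = false →
    hasOv [s, t, u, v, w, x, v, w, x, s, t, u] = false →
    hasWS [p, q, r, v, w, x] = false → False := by
  intro p q r s t u v w x hfp h0 h1 h2 h3 h4 h5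
  have g := okT
  unfold ok at g
  rw [List.all_eq_true] at g
  have g1 := g _ (mem12 _ _ _ h0)
  rw [List.all_eq_true] at g1
  have g2 := g1 _ (mem12 _ _ _ h1)
  rw [List.all_eq_true] at g2
  have g3 := g2 _ (mem12 _ _ _ h2)
  rw [Bool.not_eq_true'] at g3
  unfold good at g3
  simp only [List.cons_append, List.nil_append] at g3
  rw [h3, h4, h5] at g3
  rcases hfp with rfl | rfl | rfl <;> simp at g3

theorem stmt12 : ¬ ∃ φ : Fin 3 → List (Fin 3),
    (∀ a, (φ a).length = 3) ∧
    (∀ W, WeakSqFree W → WeakSqFree (applyM φ W)) ∧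
    (∀ W, CubeFree W → CubeFree (applyM φ W)) ∧
    (∀ W, OverlapFree W → OverlapFree (applyM φ W)) ∧
    (∃ (a : Fin 3) (V : List (Fin 3)), φ a = a :: V) := by
  rintro ⟨φ, hlen, hw, hc, ho, a, V, hfix⟩
  obtain ⟨p, q, r, h0⟩ := List.length_eq_three.mp (hlen 0)
  obtain ⟨s, t, u, h1⟩ := List.length_eq_three.mp (hlen 1)
  obtain ⟨v, w, x, h2⟩ := List.length_eq_three.mp (hlen 2)
  have hfp : p = 0 ∨ s = 1 ∨ v = 2 := by
    fin_cases a
    · left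
      have h : φ 0 = 0 :: V := hfix
      rw [h0] at h
      injection h
    · right; left
      have h : φ 1 = 1 :: V := hfix
      rw [h1] at h
      injection h
    · right; right
      have h : φ 2 = 2 :: V := hfix
      rw [h2] at h
      injection h
  have e0 : applyM φ [0] = [p, q, r] := by simp [applyM, h0]
  have e1 : applyM φ [1] = [s, t, u] := by simp [applyM, h1]
  have e2 : applyM φ [2] = [v, w, x] := by simp [applyM, h2]
  have e3 : applyM φ [0, 1, 2, 0] = [p, q, r, s, t, u, v, w, x, p, q, r] := by
    simp [applyM, h0, h1, h2]
  have e4 : applyM φ [1, 2, 2, 1] = [s, t, u, v, w, x, v, w, x, s, t, u] := by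
    simp [applyM, h1, h2]
  have e5 : applyM φ [0, 2] = [p, q, r, v, w, x] := by simp [applyM, h0, h2]
  have H0 := hasWS_eq_false (hw [0] (by decide)); rw [e0] at H0
  have H1 := hasWS_eq_false (hw [1] (by decide)); rw [e1] at H1
  have H2 := hasWS_eq_false (hw [2] (by decide)); rw [e2] at H2
  have H3 := hasWS_eq_false (hw [0, 1, 2, 0] (by decide)); rw [e3] at H3
  have H4 := hasOv_eq_false (ho [1, 2, 2, 1] (by decide)); rw [e4] at H4
  have H5 := hasWS_eq_false (hw [0, 2] (by decide)); rw [e5] at H5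
  exact key p q r s t u v w x hfp H0 H1 H2 H3 H4 H5
end
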